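/- Let 𝓑 be a primal feasible basis (B invertible, B⁻¹b ≥ 0), let j ∈ 𝓝 satisfy B⁻¹N e^j ≤ 0 (componentwise), and let w ∈ ℝ^q satisfy (Z_N w)_j < 0 (equivalently wᵀZ_Nᵀe^j < 0). Then the scalarized objective wᵀPᵀx is unbounded above on X: for every M ∈ ℝ there exists x ∈ X with wᵀPᵀx > M. -/

import Mathlib

open Matrix

/-- If a primal feasible dictionary has a column j with B⁻¹N e^j ≤ 0 and negative
reduced cost (Z_N w)_j < 0, then the scalarized objective wᵀPᵀx is unbounded above
on X. -/
theorem scalarized_unbounded_of_negative_reduced_cost_ray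
    (n m q : ℕ) (hn : 0 < n) (hm : 0 < m) (hq : 0 < q)
    (P : Matrix (Fin n) (Fin q) ℝ) (A : Matrix (Fin m) (Fin n) ℝ) (b : Fin m → ℝ)
    (X : Set (Fin n → ℝ)) (hX : X = {x | A.mulVec x ≤ b ∧ 0 ≤ x})
    (β : Fin m → Fin n ⊕ Fin m) (ν : Fin n → Fin n ⊕ Fin m)
    (hβν : Function.Bijective (Sum.elim β ν))
    (B : Matrix (Fin m) (Fin m) ℝ)
    (hB : B = (Matrix.fromCols A (1 : Matrix (Fin m) (Fin m) ℝ)).submatrix id β)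
    (N : Matrix (Fin m) (Fin n) ℝ)
    (hN : N = (Matrix.fromCols A (1 : Matrix (Fin m) (Fin m) ℝ)).submatrix id ν)
    (PB : Matrix (Fin m) (Fin q) ℝ)
    (hPB : PB = (Matrix.fromRows P (0 : Matrix (Fin m) (Fin q) ℝ)).submatrix β id)
    (PN : Matrix (Fin n) (Fin q) ℝ)
    (hPN : PN = (Matrix.fromRows P (0 : Matrix (Fin m) (Fin q) ℝ)).submatrix ν id)
    (ZN : Matrix (Fin n) (Fin q) ℝ)
    (hZN : ZN = (B⁻¹ * N).transpose * PB - PN)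
    (hBunit : IsUnit B)
    (hfeas : 0 ≤ B⁻¹.mulVec b)
    (j : Fin n)
    (hcol : (B⁻¹ * N).mulVec (Pi.single j 1) ≤ 0)
    (w : Fin q → ℝ)
    (hZwj : ZN.mulVec w j < 0) :
    ∀ M : ℝ, ∃ x ∈ X, M < w ⬝ᵥ P.transpose.mulVec x := by

  intro M0
  classical
  have hdet : IsUnit B.det := (Matrix.isUnit_iff_isUnit_det B).mp hBunit
  have hBinv : B * B⁻¹ = 1 := Matrix.mul_nonsing_inv B hdet
  set Mfull : Matrix (Fin m) (Fin n ⊕ Fin m) ℝ := Matrix.fromCols A 1 with hMfull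
  set Pfull : Matrix (Fin n ⊕ Fin m) (Fin q) ℝ := Matrix.fromRows P 0 with hPfull
  set e : Fin n → ℝ := Pi.single j 1 with he
  have he0 : ∀ k, 0 ≤ e k := by
    intro k
    rw [he, Pi.single_apply]
    split <;> norm_num
  set d : Fin m → ℝ := -((B⁻¹ * N).mulVec e) with hd
  have hd0 : ∀ i, 0 ≤ d i := by
    intro i
    have h := hcol i
    simp only [Pi.zero_apply] at h
    simp only [hd, Pi.neg_apply]
    linarith
  set x0 : Fin m → ℝ := B⁻¹.mulVec b with hx0
  set c : ℝ := -(ZN.mulVec w j) with hc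
  have hc0 : 0 < c := by rw [hc]; linarith
  set t : ℝ := (max 0 (M0 - x0 ⬝ᵥ PB.mulVec w) + 1) / c with ht
  have ht0 : 0 ≤ t := by
    apply div_nonneg _ hc0.le
    have := le_max_left (0:ℝ) (M0 - x0 ⬝ᵥ PB.mulVec w)
    linarith
  set vβ : Fin m → ℝ := x0 + t • d with hvβ
  set vν : Fin n → ℝ := t • e with hvν
  set E : (Fin m ⊕ Fin n) ≃ (Fin n ⊕ Fin m) := Equiv.ofBijective _ hβν with hE
  set v : (Fin n ⊕ Fin m) → ℝ := fun s => Sum.elim vβ vν (E.symm s) with hv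
  have hvb : ∀ i, v (β i) = vβ i := by
    intro i
    show (Sum.elim vβ vν) (E.symm (E (Sum.inl i))) = vβ i
    rw [Equiv.symm_apply_apply, Sum.elim_inl]
  have hvn : ∀ k, v (ν k) = vν k := by
    intro k
    show (Sum.elim vβ vν) (E.symm (E (Sum.inr k))) = vν k
    rw [Equiv.symm_apply_apply, Sum.elim_inr]
  have hv0 : ∀ s, 0 ≤ v s := by
    intro s
    show 0 ≤ Sum.elim vβ vν (E.symm s)
    rcases hs : E.symm s with i | k
    · have h1 := hfeas i
      simp only [Pi.zero_apply] at h1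
      have h2 : 0 ≤ t * d i := mul_nonneg ht0 (hd0 i)
      show (0:ℝ) ≤ x0 i + t * d i
      linarith
    · show (0:ℝ) ≤ t * e k
      exact mul_nonneg ht0 (he0 k)
  have hsplit : ∀ f : (Fin n ⊕ Fin m) → ℝ,
      ∑ s, f s = (∑ i, f (β i)) + ∑ k, f (ν k) := by
    intro f
    rw [← Fintype.sum_bijective (Sum.elim β ν) hβν (fun t => f (Sum.elim β ν t)) f
      (fun _ => rfl), Fintype.sum_sum_type]
    simp
  -- the full constraint matrix applied to v
  have hMv : Mfull.mulVec v = B.mulVec vβ + N.mulVec vν := by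
    funext i
    show (fun s => Mfull i s) ⬝ᵥ v = _
    rw [dotProduct, hsplit (fun s => Mfull i s * v s)]
    simp only [Pi.add_apply]
    congr 1
    · apply Finset.sum_congr rfl
      intro i' _
      rw [hvb i', hB]
      rfl
    · apply Finset.sum_congr rfl
      intro k _
      rw [hvn k, hN]
      rfl
  have hBd : B.mulVec d = -(N.mulVec e) := by
    rw [hd, Matrix.mulVec_neg, Matrix.mulVec_mulVec, ← Matrix.mul_assoc, hBinv,
      Matrix.one_mul]
  have hBx0 : B.mulVec x0 = b := by
    rw [hx0, Matrix.mulVec_mulVec, hBinv, Matrix.one_mulVec]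
  have hMvb : Mfull.mulVec v = b := by
    rw [hMv, hvβ, Matrix.mulVec_add, Matrix.mulVec_smul, hBx0, hBd, hvν,
      Matrix.mulVec_smul, smul_neg]
    abel
  set x : Fin n → ℝ := fun k => v (Sum.inl k) with hxdef
  set sl : Fin m → ℝ := fun i => v (Sum.inr i) with hsl
  have hvelim : v = Sum.elim x sl := by
    funext s
    rcases s with k | i <;> rfl
  have hAx : A.mulVec x + sl = b := by
    have : Mfull.mulVec (Sum.elim x sl) = b := by rw [← hvelim]; exact hMvb
    rw [hMfull, Matrix.fromCols_mulVec_sumElim, Matrix.one_mulVec] at this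
    exact this
  refine ⟨x, ?_, ?_⟩
  · rw [hX]
    constructor
    · intro i
      have h1 := congrFun hAx i
      have h2 : 0 ≤ sl i := hv0 (Sum.inr i)
      simp only [Pi.add_apply] at h1
      linarith
    · intro k
      exact hv0 (Sum.inl k)
  · -- objective value
    have hobj1 : w ⬝ᵥ P.transpose.mulVec x = x ⬝ᵥ P.mulVec w := by
      rw [Matrix.mulVec_transpose, dotProduct_comm, ← Matrix.dotProduct_mulVec]
    have hPfw : ∀ i, (Pfull.mulVec w) (β i) = (PB.mulVec w) i := by
      intro i
      rw [hPB]
      rfl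
    have hPfwn : ∀ k, (Pfull.mulVec w) (ν k) = (PN.mulVec w) k := by
      intro k
      rw [hPN]
      rfl
    have hPfull' : Pfull.mulVec w = Sum.elim (P.mulVec w) 0 := by
      rw [hPfull, Matrix.fromRows_mulVec, Matrix.zero_mulVec]
    have hobj2 : x ⬝ᵥ P.mulVec w = ∑ s, v s * (Pfull.mulVec w) s := by
      rw [Fintype.sum_sum_type]
      simp only [hPfull', Sum.elim_inl, Sum.elim_inr, Pi.zero_apply, mul_zero,
        Finset.sum_const_zero, add_zero]
      rfl
    have hobj3 : ∑ s, v s * (Pfull.mulVec w) s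
        = vβ ⬝ᵥ PB.mulVec w + vν ⬝ᵥ PN.mulVec w := by
      rw [hsplit (fun s => v s * (Pfull.mulVec w) s)]
      congr 1
      · apply Finset.sum_congr rfl
        intro i _
        rw [hvb i, hPfw i]
      · apply Finset.sum_congr rfl
        intro k _
        rw [hvn k, hPfwn k]
    have hslope : d ⬝ᵥ PB.mulVec w + e ⬝ᵥ PN.mulVec w = c := by
      rw [hd, neg_dotProduct, ← Matrix.vecMul_transpose,
        ← Matrix.dotProduct_mulVec, Matrix.mulVec_mulVec, hc, hZN,
        Matrix.sub_mulVec]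
      simp only [he, single_dotProduct, one_mul, Pi.sub_apply]
      ring
    have hobj : w ⬝ᵥ P.transpose.mulVec x = x0 ⬝ᵥ PB.mulVec w + t * c := by
      rw [hobj1, hobj2, hobj3, hvβ, hvν, add_dotProduct,
        smul_dotProduct, smul_dotProduct, smul_eq_mul, smul_eq_mul,
        ← hslope]
      ring
    rw [hobj]
    have htc : t * c = max 0 (M0 - x0 ⬝ᵥ PB.mulVec w) + 1 := by
      rw [ht, div_mul_cancel₀ _ hc0.ne']
    rw [htc]
    have := le_max_right (0:ℝ) (M0 - x0 ⬝ᵥ PB.mulVec w)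
    linarith
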